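/- Let T : C[a,b] → C[a,b] be a positive linear operator, f ∈ C[a,b], x ∈ [a,b], and δ > 0. Then |T(f)(x) − f(x)| ≤ ‖f‖ |T(e_0)(x) − 1| + (T(e_0)(x) + δ^{-2} T(φ_x)(x)) ω₁(f; δ), where φ_x(z) = (z − x)² and ω₁ is the modulus of continuity of f. -/

import Mathlib

open Filter Set Topology

/-- The constant test function `e₀ = 1` on `[a, b]`. -/
def e₀ (a b : ℝ) : C(Set.Icc a b, ℝ) := ContinuousMap.const _ 1

/-- The test function `φₓ(z) = (z - x)²` on `[a, b]`. -/
def φ (a b : ℝ) (x : Set.Icc a b) : C(Set.Icc a b, ℝ) :=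
  ⟨fun z => ((z : ℝ) - (x : ℝ)) ^ 2, by fun_prop⟩

/-- Quantitative Korovkin (Shisha–Mond) inequality via the modulus of
continuity: for a positive linear operator `T` on `C[a,b]`,
`|T f x - f x| ≤ ‖f‖ |T e₀ x - 1| + (T e₀ x + δ⁻² T φₓ x) ω₁(f; δ)`. -/
theorem shisha_mond_modulus (a b : ℝ) (hab : a ≤ b)
    (T : C(Set.Icc a b, ℝ) →ₗ[ℝ] C(Set.Icc a b, ℝ))
    (hT_pos : ∀ f : C(Set.Icc a b, ℝ), (∀ x, 0 ≤ f x) → ∀ x, 0 ≤ T f x)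
    (f : C(Set.Icc a b, ℝ)) (x : Set.Icc a b) (δ : ℝ) (hδ : 0 < δ)
    (ω : ℝ → ℝ)
    (hω : ∀ s : ℝ, ω s =
      sSup {y : ℝ | ∃ u v : Set.Icc a b, |(v : ℝ) - (u : ℝ)| ≤ s ∧ y = |f v - f u|}) :
    |T f x - f x| ≤
      ‖f‖ * |T (e₀ a b) x - 1| + (T (e₀ a b) x + δ⁻¹ ^ 2 * T (φ a b x) x) * ω δ := by
  have hbdd : BddAbove {y : ℝ | ∃ u v : Set.Icc a b,
      |(v : ℝ) - (u : ℝ)| ≤ δ ∧ y = |f v - f u|} := by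
    refine ⟨2 * ‖f‖, ?_⟩
    rintro y ⟨u, v, -, rfl⟩
    have h1 : |f v| ≤ ‖f‖ := by
      simpa [Real.norm_eq_abs] using f.norm_coe_le_norm v
    have h2 : |f u| ≤ ‖f‖ := by
      simpa [Real.norm_eq_abs] using f.norm_coe_le_norm u
    calc |f v - f u| ≤ |f v| + |f u| := abs_sub _ _
      _ ≤ 2 * ‖f‖ := by linarith
  have hωle : ∀ u v : Set.Icc a b, |(v : ℝ) - (u : ℝ)| ≤ δ → |f v - f u| ≤ ω δ := by
    intro u v h
    rw [hω]
    exact le_csSup hbdd ⟨u, v, h, rfl⟩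
  have hω0 : 0 ≤ ω δ := by
    have := hωle x x (by simp [hδ.le])
    simpa using this
  -- telescoping lemma
  have htel : ∀ n : ℕ, ∀ u v : Set.Icc a b,
      |(v : ℝ) - (u : ℝ)| ≤ n * δ → |f v - f u| ≤ n * ω δ := by
    intro n
    induction n with
    | zero =>
      intro u v h
      have h0 : |(v : ℝ) - (u : ℝ)| ≤ 0 := by simpa using h
      have : (v : ℝ) = (u : ℝ) := by
        have := abs_nonneg ((v : ℝ) - (u : ℝ))
        have : |(v : ℝ) - (u : ℝ)| = 0 := le_antisymm h0 this
        linarith [abs_eq_zero.mp this, sub_eq_zero.mp (abs_eq_zero.mp this)]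
      have huv : u = v := Subtype.ext this.symm
      simp [huv]
    | succ n ih =>
      intro u v h
      set t : ℝ := n / (n + 1) with ht
      have hn1 : (0 : ℝ) < n + 1 := by positivity
      have ht0 : 0 ≤ t := by positivity
      have ht1 : t ≤ 1 := by
        rw [ht, div_le_one hn1]; linarith
      set w : ℝ := (1 - t) * u + t * v with hw
      have hwmem : w ∈ Set.Icc a b := by
        obtain ⟨ha1, hb1⟩ := u.2
        obtain ⟨ha2, hb2⟩ := v.2
        constructor <;> nlinarith
      have hwu : w - (u : ℝ) = t * ((v : ℝ) - u) := by rw [hw]; ring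
      have hvw : (v : ℝ) - w = (1 - t) * ((v : ℝ) - u) := by rw [hw]; ring
      have habs : |(v : ℝ) - (u : ℝ)| ≤ (n + 1) * δ := by
        simpa [Nat.cast_succ] using h
      have h1 : |w - (u : ℝ)| ≤ n * δ := by
        rw [hwu, abs_mul, abs_of_nonneg ht0]
        calc t * |(v : ℝ) - u| ≤ t * ((n + 1) * δ) := by
              apply mul_le_mul_of_nonneg_left habs ht0
          _ = n * δ := by rw [ht]; field_simp
      have h2 : |(v : ℝ) - w| ≤ δ := by
        rw [hvw, abs_mul, abs_of_nonneg (by linarith : (0:ℝ) ≤ 1 - t)]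
        have h1t : 1 - t = 1 / (n + 1) := by rw [ht]; field_simp; ring
        calc (1 - t) * |(v : ℝ) - u| ≤ (1 - t) * ((n + 1) * δ) := by
              apply mul_le_mul_of_nonneg_left habs (by linarith)
          _ = δ := by rw [h1t]; field_simp
      have hihw := ih u ⟨w, hwmem⟩ h1
      have hlast := hωle ⟨w, hwmem⟩ v h2
      calc |f v - f u| ≤ |f v - f ⟨w, hwmem⟩| + |f ⟨w, hwmem⟩ - f u| := abs_sub_le _ _ _
        _ ≤ ω δ + n * ω δ := add_le_add hlast hihw
        _ = (n + 1 : ℕ) * ω δ := by push_cast; ring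
  -- pointwise key estimate
  have key : ∀ z : Set.Icc a b,
      |f z - f x| ≤ ω δ * (1 + δ⁻¹ ^ 2 * ((z : ℝ) - (x : ℝ)) ^ 2) := by
    intro z
    by_cases hc : |(z : ℝ) - (x : ℝ)| ≤ δ
    · have h1 := hωle x z hc
      have hfac : 1 ≤ 1 + δ⁻¹ ^ 2 * ((z : ℝ) - (x : ℝ)) ^ 2 := by nlinarith [sq_nonneg (δ⁻¹ * ((z : ℝ) - (x : ℝ)))]
      nlinarith
    · push_neg at hc
      set d : ℝ := |(z : ℝ) - (x : ℝ)| with hd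
      have hd0 : 0 < d := lt_trans hδ hc
      set n : ℕ := ⌈d / δ⌉₊ with hn
      have hdn : d ≤ n * δ := by
        have h1 : d / δ ≤ n := Nat.le_ceil _
        calc d = d / δ * δ := by field_simp
          _ ≤ n * δ := mul_le_mul_of_nonneg_right h1 hδ.le
      have h1 := htel n x z hdn
      have hnle : (n : ℝ) ≤ d / δ + 1 := by
        have := Nat.ceil_lt_add_one (a := d / δ) (div_nonneg (abs_nonneg _) hδ.le)
        linarith
      have hdd : 1 ≤ d / δ := (one_le_div hδ).2 hc.le
      have hn2 : (n : ℝ) ≤ 1 + (d / δ) ^ 2 := by nlinarith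
      have hsq : d ^ 2 = ((z : ℝ) - (x : ℝ)) ^ 2 := sq_abs _
      calc |f z - f x| ≤ n * ω δ := h1
        _ ≤ (1 + (d / δ) ^ 2) * ω δ := mul_le_mul_of_nonneg_right hn2 hω0
        _ = ω δ * (1 + δ⁻¹ ^ 2 * ((z : ℝ) - (x : ℝ)) ^ 2) := by
            rw [div_pow, ← hsq]; field_simp
  -- positivity argument
  set g : C(Set.Icc a b, ℝ) := f - f x • e₀ a b with hg
  set h : C(Set.Icc a b, ℝ) := ω δ • (e₀ a b + δ⁻¹ ^ 2 • φ a b x) with hh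
  have hgz : ∀ z, g z = f z - f x := by
    intro z; simp [hg, e₀]
  have hhz : ∀ z, h z = ω δ * (1 + δ⁻¹ ^ 2 * ((z : ℝ) - (x : ℝ)) ^ 2) := by
    intro z; simp [hh, e₀, φ]; ring
  have hp1 : ∀ z, 0 ≤ (h - g) z := by
    intro z
    have := (abs_le.mp (key z)).2
    simp only [ContinuousMap.sub_apply, hgz, hhz]
    linarith
  have hp2 : ∀ z, 0 ≤ (h + g) z := by
    intro z
    have := (abs_le.mp (key z)).1
    simp only [ContinuousMap.add_apply, hgz, hhz]
    linarith
  have q1 := hT_pos _ hp1 x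
  have q2 := hT_pos _ hp2 x
  rw [map_sub] at q1
  rw [map_add] at q2
  simp only [ContinuousMap.sub_apply, ContinuousMap.add_apply] at q1 q2
  have hTg : |T g x| ≤ T h x := abs_le.mpr ⟨by linarith, by linarith⟩
  have hTgval : T g x = T f x - f x * T (e₀ a b) x := by
    rw [hg, map_sub, map_smul]
    simp
  have hThval : T h x = ω δ * (T (e₀ a b) x + δ⁻¹ ^ 2 * T (φ a b x) x) := by
    rw [hh, map_smul, map_add, map_smul]
    simp
    ring
  have hfx : |f x| ≤ ‖f‖ := by
    simpa [Real.norm_eq_abs] using f.norm_coe_le_norm x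
  have hdecomp : T f x - f x = T g x + f x * (T (e₀ a b) x - 1) := by
    rw [hTgval]; ring
  have habs1 : |f x * (T (e₀ a b) x - 1)| ≤ ‖f‖ * |T (e₀ a b) x - 1| := by
    rw [abs_mul]
    exact mul_le_mul_of_nonneg_right hfx (abs_nonneg _)
  calc |T f x - f x| = |T g x + f x * (T (e₀ a b) x - 1)| := by rw [hdecomp]
    _ ≤ |T g x| + |f x * (T (e₀ a b) x - 1)| := abs_add_le _ _
    _ ≤ T h x + ‖f‖ * |T (e₀ a b) x - 1| := add_le_add hTg habs1
    _ = ‖f‖ * |T (e₀ a b) x - 1| +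
        (T (e₀ a b) x + δ⁻¹ ^ 2 * T (φ a b x) x) * ω δ := by
      rw [hThval]; ring
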